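/- Let 𝕊 be a quantum system with policy ↝. Suppose that for each agent a ∈ A there is an equivalence relation ∼ₐ on reachable density operators satisfying: (step consistency) if ρ ∼ₐ σ then 𝓔_{b,c}(ρ) ∼ₐ 𝓔_{b,c}(σ) for all b ∈ A and c ∈ C; and (local respect of ↝) if ¬(b ↝ a) then ρ ∼ₐ 𝓔_{b,c}(ρ) for all c ∈ C and all reachable ρ. Then K(𝕊,↝) ≤ sup{ d_a(ρ,σ) : ρ, σ reachable, ρ ∼ₐ σ, a ∈ A }. -/

import Mathlib

open scoped Classical ComplexOrder
open Matrix Kronecker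

noncomputable section

/-- A density operator: positive semidefinite with trace 1. -/
def IsDensity {d : Type} [Fintype d] [DecidableEq d] (ρ : Matrix d d ℂ) : Prop :=
  ρ.PosSemidef ∧ ρ.trace = 1

/-- A super-operator: a linear, positive, trace-preserving map on matrices. -/
def IsSuperOp {d : Type} [Fintype d] [DecidableEq d]
    (F : Matrix d d ℂ → Matrix d d ℂ) : Prop :=
  IsLinearMap ℂ F ∧ (∀ ρ : Matrix d d ℂ, ρ.PosSemidef → (F ρ).PosSemidef) ∧
    (∀ ρ : Matrix d d ℂ, (F ρ).trace = ρ.trace)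

/-- A finite family of matrices (the data of a measurement). -/
structure PMeas (d : Type) where
  m : ℕ
  E : Fin m → Matrix d d ℂ

/-- The family is a POVM: positive semidefinite elements summing to the identity. -/
def PMeas.IsPOVM {d : Type} [Fintype d] [DecidableEq d] (P : PMeas d) : Prop :=
  (∀ i, (P.E i).PosSemidef) ∧ ∑ i, P.E i = 1

/-- The distance between outcome distributions of a measurement on two states. -/
def dE {d : Type} [Fintype d] (P : PMeas d) (ρ σ : Matrix d d ℂ) : ℝ :=
  (1 / 2) * ∑ i, ‖(P.E i * ρ).trace - (P.E i * σ).trace‖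

/-- The measurement pseudo-distance induced by a set of measurements. -/
def dM {d : Type} [Fintype d] (M : Set (PMeas d)) (ρ σ : Matrix d d ℂ) : ℝ :=
  sSup { x | ∃ P ∈ M, x = dE P ρ σ }

/-- A quantum system: initial state, agents, commands, super-operators, measurements. -/
structure QSystem (Agent Cmd d : Type) where
  ρ0 : Matrix d d ℂ
  A : Set Agent
  C : Set Cmd
  Ecmd : Agent → Cmd → Matrix d d ℂ → Matrix d d ℂ
  M : Agent → Set (PMeas d)

/-- Well-formedness: the initial state is a density operator, commands act as
super-operators, and agents measure with POVMs. -/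
def QSystem.WellFormed {Agent Cmd d : Type} [Fintype d] [DecidableEq d]
    (S : QSystem Agent Cmd d) : Prop :=
  IsDensity S.ρ0 ∧ (∀ a ∈ S.A, ∀ c ∈ S.C, IsSuperOp (S.Ecmd a c)) ∧
    (∀ a ∈ S.A, ∀ P ∈ S.M a, P.IsPOVM)

/-- Execution of a finite action sequence (composition of super-operators, in order). -/
def QSystem.run {Agent Cmd d : Type} (S : QSystem Agent Cmd d)
    (α : List (Agent × Cmd)) (ρ : Matrix d d ℂ) : Matrix d d ℂ :=
  α.foldl (fun τ p => S.Ecmd p.1 p.2 τ) ρ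

/-- A sequence over A × C. -/
def QSystem.Valid {Agent Cmd d : Type} (S : QSystem Agent Cmd d)
    (α : List (Agent × Cmd)) : Prop :=
  ∀ p ∈ α, p.1 ∈ S.A ∧ p.2 ∈ S.C

/-- `purge G D α` deletes from `α` every pair `(a, c)` with `a ∈ G` and `c ∈ D`. -/
def purge {Agent Cmd : Type} (G : Set Agent) (D : Set Cmd) :
    List (Agent × Cmd) → List (Agent × Cmd)
  | [] => []
  | p :: rest => if p.1 ∈ G ∧ p.2 ∈ D then purge G D rest else p :: purge G D rest

/-- A reachable density operator. -/
def QSystem.Reachable {Agent Cmd d : Type} (S : QSystem Agent Cmd d)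
    (ρ : Matrix d d ℂ) : Prop :=
  ∃ α, S.Valid α ∧ S.run α S.ρ0 = ρ

/-- `∇ a`: the set of agents from which information may not flow to `a`. -/
def nabla {Agent : Type} (pol : Agent → Agent → Prop) (a : Agent) : Set Agent :=
  { b | ¬ pol b a }

/-- The security degree `K(𝕊,↝)`. -/
def Kdeg {Agent Cmd d : Type} [Fintype d] (S : QSystem Agent Cmd d)
    (pol : Agent → Agent → Prop) : ℝ :=
  sSup { x | ∃ a ∈ S.A, ∃ α, S.Valid α ∧
    x = dM (S.M a) (S.run α S.ρ0) (S.run (purge (nabla pol a) Set.univ α) S.ρ0) }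

/-- The `t`-bounded security degree `K_t(𝕊,↝)`. -/
def Kt {Agent Cmd d : Type} [Fintype d] (S : QSystem Agent Cmd d)
    (pol : Agent → Agent → Prop) (t : ℕ) : ℝ :=
  sSup { x | ∃ a ∈ S.A, ∃ α, S.Valid α ∧ α.length ≤ t ∧
    x = dM (S.M a) (S.run α S.ρ0) (S.run (purge (nabla pol a) Set.univ α) S.ρ0) }

/-- The interference degree `Int(G₁, D | G₂)`. -/
def IntDeg {Agent Cmd d : Type} [Fintype d] (S : QSystem Agent Cmd d)
    (G1 : Set Agent) (D : Set Cmd) (G2 : Set Agent) : ℝ :=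
  sSup { x | ∃ a ∈ G2, ∃ α, S.Valid α ∧
    x = dM (S.M a) (S.run α S.ρ0) (S.run (purge G1 D α) S.ρ0) }

/-- Trace distance `d(ρ,σ) = (1/2)·tr √((ρ−σ)†(ρ−σ))`. -/
def traceDist {d : Type} [Fintype d] [DecidableEq d] (ρ σ : Matrix d d ℂ) : ℝ :=
  (1 / 2) * (((Matrix.posSemidef_conjTranspose_mul_self (ρ - σ)).1.eigenvectorUnitary.1 *
    diagonal (((↑) : ℝ → ℂ) ∘ (√·) ∘ (Matrix.posSemidef_conjTranspose_mul_self (ρ - σ)).1.eigenvalues) *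
    (star (Matrix.posSemidef_conjTranspose_mul_self (ρ - σ)).1.eigenvectorUnitary :
      Matrix d d ℂ)).trace).re

end
noncomputable section

section Aux

variable {Agent Cmd d : Type} [Fintype d] [DecidableEq d]

lemma run_cons (S : QSystem Agent Cmd d) (p : Agent × Cmd) (α : List (Agent × Cmd))
    (ρ : Matrix d d ℂ) : S.run (p :: α) ρ = S.run α (S.Ecmd p.1 p.2 ρ) := rfl

lemma run_append (S : QSystem Agent Cmd d) (α β : List (Agent × Cmd))
    (ρ : Matrix d d ℂ) : S.run (α ++ β) ρ = S.run β (S.run α ρ) :=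
  List.foldl_append

lemma reachable_run (S : QSystem Agent Cmd d) {ρ : Matrix d d ℂ}
    (hρ : S.Reachable ρ) {α : List (Agent × Cmd)} (hα : S.Valid α) :
    S.Reachable (S.run α ρ) := by
  obtain ⟨β, hβ, rfl⟩ := hρ
  exact ⟨β ++ α, fun p hp => ((List.mem_append.mp hp).elim (hβ p) (hα p)),
    run_append S β α S.ρ0⟩

lemma mem_purge {G : Set Agent} {D : Set Cmd} {α : List (Agent × Cmd)}
    {p : Agent × Cmd} (hp : p ∈ purge G D α) : p ∈ α := by
  induction α with
  | nil => simpa [purge] using hp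
  | cons q rest ih =>
    by_cases hq : q.1 ∈ G ∧ q.2 ∈ D
    · simp only [purge, if_pos hq] at hp
      exact List.mem_cons_of_mem _ (ih hp)
    · simp only [purge, if_neg hq, List.mem_cons] at hp
      rcases hp with h | h
      · exact h ▸ List.mem_cons_self
      · exact List.mem_cons_of_mem _ (ih h)

lemma valid_purge (S : QSystem Agent Cmd d) {G : Set Agent} {D : Set Cmd}
    {α : List (Agent × Cmd)} (hα : S.Valid α) : S.Valid (purge G D α) :=
  fun p hp => hα p (mem_purge hp)

/-- Main unwinding induction. -/
lemma unwind_key (S : QSystem Agent Cmd d)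
    (pol : Agent → Agent → Prop) (a : Agent) (ha : a ∈ S.A)
    (sim : Agent → Matrix d d ℂ → Matrix d d ℂ → Prop)
    (hsymm : ∀ a ∈ S.A, ∀ ρ σ, S.Reachable ρ → S.Reachable σ →
      sim a ρ σ → sim a σ ρ)
    (htrans : ∀ a ∈ S.A, ∀ ρ σ τ, S.Reachable ρ → S.Reachable σ → S.Reachable τ →
      sim a ρ σ → sim a σ τ → sim a ρ τ)
    (hstep : ∀ a ∈ S.A, ∀ b ∈ S.A, ∀ c ∈ S.C, ∀ ρ σ, S.Reachable ρ → S.Reachable σ →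
      sim a ρ σ → sim a (S.Ecmd b c ρ) (S.Ecmd b c σ))
    (hlocal : ∀ a ∈ S.A, ∀ b ∈ S.A, ¬ pol b a → ∀ c ∈ S.C, ∀ ρ, S.Reachable ρ →
      sim a ρ (S.Ecmd b c ρ)) :
    ∀ α : List (Agent × Cmd), S.Valid α → ∀ ρ σ, S.Reachable ρ → S.Reachable σ →
      sim a ρ σ →
      sim a (S.run α ρ) (S.run (purge (nabla pol a) Set.univ α) σ) := by
  intro α
  induction α with
  | nil => intro _ ρ σ _ _ h; simpa [QSystem.run, purge] using h
  | cons p rest ih =>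
    intro hval ρ σ hρ hσ hsim
    have hp : p.1 ∈ S.A ∧ p.2 ∈ S.C := hval p (List.mem_cons_self)
    have hrest : S.Valid rest := fun q hq => hval q (List.mem_cons_of_mem _ hq)
    have hEρ : S.Reachable (S.Ecmd p.1 p.2 ρ) := by
      have := reachable_run S hρ (α := [p]) (by
        intro q hq; simp only [List.mem_singleton] at hq; exact hq ▸ hp)
      simpa [QSystem.run] using this
    by_cases hnab : p.1 ∈ nabla pol a
    · have hps : sim a (S.Ecmd p.1 p.2 ρ) σ := by
        have h1 : sim a ρ (S.Ecmd p.1 p.2 ρ) :=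
          hlocal a ha p.1 hp.1 hnab p.2 hp.2 ρ hρ
        exact htrans a ha _ _ _ hEρ hρ hσ (hsymm a ha _ _ hρ hEρ h1) hsim
      have : purge (nabla pol a) Set.univ (p :: rest)
          = purge (nabla pol a) Set.univ rest := by
        simp [purge, hnab]
      rw [this, run_cons]
      exact ih hrest _ _ hEρ hσ hps
    · have hEσ : S.Reachable (S.Ecmd p.1 p.2 σ) := by
        have := reachable_run S hσ (α := [p]) (by
          intro q hq; simp only [List.mem_singleton] at hq; exact hq ▸ hp)
        simpa [QSystem.run] using this
      have : purge (nabla pol a) Set.univ (p :: rest)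
          = p :: purge (nabla pol a) Set.univ rest := by
        simp [purge, hnab]
      rw [this, run_cons, run_cons]
      exact ih hrest _ _ hEρ hEσ (hstep a ha p.1 hp.1 p.2 hp.2 _ _ hρ hσ hsim)

lemma run_density (S : QSystem Agent Cmd d) (hS : S.WellFormed)
    {α : List (Agent × Cmd)} (hα : S.Valid α) :
    ∀ ρ, IsDensity ρ → IsDensity (S.run α ρ) := by
  induction α with
  | nil => intro ρ h; simpa [QSystem.run] using h
  | cons p rest ih =>
    intro ρ h
    have hp : p.1 ∈ S.A ∧ p.2 ∈ S.C := hα p (List.mem_cons_self)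
    have hso : IsSuperOp (S.Ecmd p.1 p.2) := hS.2.1 p.1 hp.1 p.2 hp.2
    have hd : IsDensity (S.Ecmd p.1 p.2 ρ) :=
      ⟨hso.2.1 ρ h.1, by rw [hso.2.2, h.2]⟩
    rw [run_cons]
    exact ih (fun q hq => hα q (List.mem_cons_of_mem _ hq)) _ hd

lemma reachable_density (S : QSystem Agent Cmd d) (hS : S.WellFormed)
    {ρ : Matrix d d ℂ} (hρ : S.Reachable ρ) : IsDensity ρ := by
  obtain ⟨α, hα, rfl⟩ := hρ
  exact run_density S hS hα S.ρ0 hS.1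

/-- Diagonal entries of a PSD matrix are nonnegative (in ℂ). -/
lemma psd_trace_nonneg {M : Matrix d d ℂ} (hM : M.PosSemidef) : 0 ≤ M.trace := by
  have h : ∀ i, 0 ≤ M i i := by
    intro i
    exact hM.diag_nonneg
  exact Finset.sum_nonneg fun i _ => h i

lemma trace_mul_psd_nonneg {E ρ : Matrix d d ℂ} (hE : E.PosSemidef)
    (hρ : ρ.PosSemidef) : 0 ≤ (E * ρ).trace := by
  open scoped MatrixOrder in
  obtain ⟨B, rfl⟩ := CStarAlgebra.nonneg_iff_eq_star_mul_self.mp hE.nonneg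
  have hps : (B * ρ * Bᴴ).PosSemidef := hρ.mul_mul_conjTranspose_same B
  have : (star B * B * ρ).trace = (B * ρ * Bᴴ).trace := by
    rw [Matrix.mul_assoc, Matrix.trace_mul_comm, Matrix.star_eq_conjTranspose]
  rw [this]
  exact psd_trace_nonneg hps

/-- POVM distance between densities is at most 1. -/
lemma dE_le_one {P : PMeas d} (hP : P.IsPOVM) {ρ σ : Matrix d d ℂ}
    (hρ : IsDensity ρ) (hσ : IsDensity σ) : dE P ρ σ ≤ 1 := by
  have key : ∀ (τ : Matrix d d ℂ), IsDensity τ →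
      (∀ i, 0 ≤ ((P.E i * τ).trace).re ∧ ((P.E i * τ).trace).im = 0) ∧
      ∑ i, ((P.E i * τ).trace).re = 1 := by
    intro τ hτ
    have h1 : ∀ i, 0 ≤ (P.E i * τ).trace := fun i =>
      trace_mul_psd_nonneg (hP.1 i) hτ.1
    have h2 : ∑ i, (P.E i * τ).trace = 1 := by
      rw [← Matrix.trace_sum, ← Finset.sum_mul, hP.2, Matrix.one_mul, hτ.2]
    constructor
    · intro i
      obtain ⟨hre, him⟩ := Complex.nonneg_iff.mp (h1 i)
      exact ⟨hre, him.symm⟩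
    · have := congrArg Complex.re h2
      simpa [Complex.re_sum] using this
  obtain ⟨hρ1, hρ2⟩ := key ρ hρ
  obtain ⟨hσ1, hσ2⟩ := key σ hσ
  have habs : ∀ i, ‖(P.E i * ρ).trace - (P.E i * σ).trace‖
      ≤ ((P.E i * ρ).trace).re + ((P.E i * σ).trace).re := by
    intro i
    have h1 : ‖(P.E i * ρ).trace‖ = ((P.E i * ρ).trace).re := by
      rw [show (P.E i * ρ).trace = (((P.E i * ρ).trace).re : ℂ) from
        Complex.ext rfl (hρ1 i).2, Complex.norm_real, Real.norm_eq_abs, abs_of_nonneg]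
      · simp
      · simpa using (hρ1 i).1
    have h2 : ‖(P.E i * σ).trace‖ = ((P.E i * σ).trace).re := by
      rw [show (P.E i * σ).trace = (((P.E i * σ).trace).re : ℂ) from
        Complex.ext rfl (hσ1 i).2, Complex.norm_real, Real.norm_eq_abs, abs_of_nonneg]
      · simp
      · simpa using (hσ1 i).1
    calc ‖(P.E i * ρ).trace - (P.E i * σ).trace‖
        ≤ ‖(P.E i * ρ).trace‖ + ‖(P.E i * σ).trace‖ := by
          exact norm_sub_le _ _
      _ = ((P.E i * ρ).trace).re + ((P.E i * σ).trace).re := by rw [h1, h2]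
  have hsum : ∑ i, ‖(P.E i * ρ).trace - (P.E i * σ).trace‖ ≤ 2 := by
    calc ∑ i, ‖(P.E i * ρ).trace - (P.E i * σ).trace‖
        ≤ ∑ i, (((P.E i * ρ).trace).re + ((P.E i * σ).trace).re) :=
          Finset.sum_le_sum fun i _ => habs i
      _ = 2 := by rw [Finset.sum_add_distrib, hρ2, hσ2]; norm_num
  unfold dE
  linarith

lemma dE_nonneg {P : PMeas d} (ρ σ : Matrix d d ℂ) : 0 ≤ dE P ρ σ := by
  unfold dE
  positivity

lemma dM_nonneg (M : Set (PMeas d)) (ρ σ : Matrix d d ℂ) : 0 ≤ dM M ρ σ := by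
  apply Real.sSup_nonneg
  rintro x ⟨P, _, rfl⟩
  exact dE_nonneg ρ σ

lemma dM_le_one {M : Set (PMeas d)} (hM : ∀ P ∈ M, P.IsPOVM)
    {ρ σ : Matrix d d ℂ} (hρ : IsDensity ρ) (hσ : IsDensity σ) : dM M ρ σ ≤ 1 := by
  apply Real.sSup_le
  · rintro x ⟨P, hP, rfl⟩
    exact dE_le_one (hM P hP) hρ hσ
  · norm_num

end Aux

/-- **Unwinding I.** If each agent has an equivalence relation on reachable density
operators which is step consistent and locally respects the policy, then the security
degree is bounded by the supremum of the agents' measurement distances over related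
pairs of reachable states. -/
theorem unwinding_I {Agent Cmd d : Type} [Fintype d] [DecidableEq d] [Nonempty d]
    (S : QSystem Agent Cmd d) (hS : S.WellFormed)
    (pol : Agent → Agent → Prop) (hpol : ∀ a ∈ S.A, pol a a)
    (sim : Agent → Matrix d d ℂ → Matrix d d ℂ → Prop)
    (hrefl : ∀ a ∈ S.A, ∀ ρ, S.Reachable ρ → sim a ρ ρ)
    (hsymm : ∀ a ∈ S.A, ∀ ρ σ, S.Reachable ρ → S.Reachable σ →
      sim a ρ σ → sim a σ ρ)
    (htrans : ∀ a ∈ S.A, ∀ ρ σ τ, S.Reachable ρ → S.Reachable σ → S.Reachable τ →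
      sim a ρ σ → sim a σ τ → sim a ρ τ)
    (hstep : ∀ a ∈ S.A, ∀ b ∈ S.A, ∀ c ∈ S.C, ∀ ρ σ, S.Reachable ρ → S.Reachable σ →
      sim a ρ σ → sim a (S.Ecmd b c ρ) (S.Ecmd b c σ))
    (hlocal : ∀ a ∈ S.A, ∀ b ∈ S.A, ¬ pol b a → ∀ c ∈ S.C, ∀ ρ, S.Reachable ρ →
      sim a ρ (S.Ecmd b c ρ)) :
    Kdeg S pol ≤ sSup { x | ∃ a ∈ S.A, ∃ ρ σ, S.Reachable ρ ∧ S.Reachable σ ∧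
      sim a ρ σ ∧ x = dM (S.M a) ρ σ } := by
  set T := { x | ∃ a ∈ S.A, ∃ ρ σ, S.Reachable ρ ∧ S.Reachable σ ∧
      sim a ρ σ ∧ x = dM (S.M a) ρ σ } with hT
  have hbdd : ∀ x ∈ T, x ≤ 1 := by
    rintro x ⟨a, ha, ρ, σ, hρ, hσ, -, rfl⟩
    exact dM_le_one (hS.2.2 a ha) (reachable_density S hS hρ)
      (reachable_density S hS hσ)
  have hTnn : 0 ≤ sSup T := by
    apply Real.sSup_nonneg
    rintro x ⟨a, ha, ρ, σ, hρ, hσ, -, rfl⟩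
    exact dM_nonneg _ _ _
  apply Real.sSup_le _ hTnn
  rintro x ⟨a, ha, α, hα, rfl⟩
  have hρ0 : S.Reachable S.ρ0 := ⟨[], by intro p hp; simp at hp, rfl⟩
  have h1 : S.Reachable (S.run α S.ρ0) := reachable_run S hρ0 hα
  have h2 : S.Reachable (S.run (purge (nabla pol a) Set.univ α) S.ρ0) :=
    reachable_run S hρ0 (valid_purge S hα)
  have hsim : sim a (S.run α S.ρ0) (S.run (purge (nabla pol a) Set.univ α) S.ρ0) :=
    unwind_key S pol a ha sim hsymm htrans hstep hlocal α hα S.ρ0 S.ρ0 hρ0 hρ0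
      (hrefl a ha S.ρ0 hρ0)
  exact le_csSup ⟨1, fun y hy => hbdd y hy⟩
    ⟨a, ha, _, _, h1, h2, hsim, rfl⟩

end
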